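/- Let P be a graphoid over V, let π be a permutation, and suppose j → k is a singular edge in the induced DAG G_π. Then there exists a sequence of permutations from π to τ = tuck(π, j, k), each obtained from the previous by an adjacent transposition, such that all intermediate permutations induce the same DAG G_π, and G_τ ≠ G_π. -/

import Mathlib

open Classical
attribute [local instance] Classical.propDecidable
set_option maxHeartbeats 1000000

variable {V : Type} [Fintype V] [DecidableEq V]

/-- A conditional independence model over variable set `V`:
`I A B C` means `A` is independent of `B` given `C`. -/
abbrev IndepModel (V : Type) :=
  Finset V → Finset V → Finset V → Prop

/-- Semigraphoid axioms. -/
structure Semigraphoid (I : IndepModel V) : Prop where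
  symm : ∀ A B C, I A B C → I B A C
  decomposition : ∀ A B W C, I A (B ∪ W) C → I A B C ∧ I A W C
  weakUnion : ∀ A B W C, I A (B ∪ W) C → I A B (C ∪ W)
  contraction : ∀ A B W C, I A B C → I A W (C ∪ B) → I A (B ∪ W) C

/-- Graphoid axioms. -/
structure Graphoid (I : IndepModel V) extends Semigraphoid I : Prop where
  intersection : ∀ A B W C, I A B (C ∪ W) → I A W (C ∪ B) → I A (B ∪ W) C

/-- Compositional graphoid axioms. -/
structure CompGraphoid (I : IndepModel V) extends Graphoid I : Prop where
  composition : ∀ A B W C, I A B C → I A W C → I A (B ∪ W) C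

/-- `M` is a Markov blanket of `X` relative to `Z`. -/
def MarkovBlanket (I : IndepModel V) (X : V) (Z M : Finset V) : Prop :=
  M ⊆ Z ∧ I {X} (Z \ M) M

/-- `M` is a Markov boundary (minimal Markov blanket) of `X` relative to `Z`. -/
def MarkovBoundary (I : IndepModel V) (X : V) (Z M : Finset V) : Prop :=
  MarkovBlanket I X Z M ∧ ∀ M' ⊂ M, ¬ I {X} (Z \ M') M'

/-- A directed graph on `V`, given by its finite set of directed edges. -/
abbrev EdgeSet (V : Type) := Finset (V × V)

def Adj (E : EdgeSet V) (a b : V) : Prop := (a, b) ∈ E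

/-- Acyclicity: no vertex reaches itself by a nontrivial directed path. -/
def IsDAG (E : EdgeSet V) : Prop := ∀ v, ¬ Relation.TransGen (Adj E) v v

def parents (E : EdgeSet V) (v : V) : Finset V :=
  (E.filter (fun e => e.2 = v)).image Prod.fst

def IsCollider (E : EdgeSet V) (x y z : V) : Prop := Adj E x y ∧ Adj E z y

/-- The middle vertex `y` of a path triple `x - y - z` does not block the path
given conditioning set `C`. -/
def ActiveTriple (E : EdgeSet V) (C : Finset V) (x y z : V) : Prop :=
  (IsCollider E x y z ∧ ∃ d ∈ C, Relation.ReflTransGen (Adj E) y d) ∨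
  (¬ IsCollider E x y z ∧ y ∉ C)

/-- `a` and `b` are d-connected given `C` in the graph `E`. -/
def DConn (E : EdgeSet V) (C : Finset V) (a b : V) : Prop :=
  ∃ p : List V, 2 ≤ p.length ∧ p.head? = some a ∧ p.getLast? = some b ∧
    (∀ (i : ℕ) (h : i + 1 < p.length),
      Adj E (p.get ⟨i, by omega⟩) (p.get ⟨i + 1, h⟩) ∨
      Adj E (p.get ⟨i + 1, h⟩) (p.get ⟨i, by omega⟩)) ∧
    (∀ (i : ℕ) (h : i + 2 < p.length),
      ActiveTriple E C (p.get ⟨i, by omega⟩) (p.get ⟨i + 1, by omega⟩) (p.get ⟨i + 2, h⟩))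

/-- `A` and `B` are d-separated given `C`. -/
def DSep (E : EdgeSet V) (A B C : Finset V) : Prop :=
  ∀ a ∈ A, ∀ b ∈ B, ¬ DConn E C a b

def PairwiseDisjoint3 (A B C : Finset V) : Prop :=
  Disjoint A B ∧ Disjoint A C ∧ Disjoint B C

/-- `I(G) ⊆ I(P)`: every d-separation of the graph is an independence of `I`. -/
def Markovian (E : EdgeSet V) (I : IndepModel V) : Prop :=
  ∀ A B C, PairwiseDisjoint3 A B C → DSep E A B C → I A B C

/-- `I(P) ⊆ I(G)`: every independence of `I` is a d-separation of the graph. -/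
def FaithfulTo (E : EdgeSet V) (I : IndepModel V) : Prop :=
  ∀ A B C, PairwiseDisjoint3 A B C → I A B C → DSep E A B C

/-- `I(E) ⊆ I(E')` : every d-separation statement of `E` holds in `E'`. -/
def ISub (E E' : EdgeSet V) : Prop :=
  ∀ A B C, PairwiseDisjoint3 A B C → DSep E A B C → DSep E' A B C

/-- Markov equivalence: same d-separation statements. -/
def MEquiv (E E' : EdgeSet V) : Prop := ISub E E' ∧ ISub E' E

/-- Markovian DAGs. -/
def CMC (I : IndepModel V) : Set (EdgeSet V) := {G | IsDAG G ∧ Markovian G I}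

/-- Faithful DAGs. -/
def CFC (I : IndepModel V) : Set (EdgeSet V) := {G | G ∈ CMC I ∧ FaithfulTo G I}

/-- SGS-minimal DAGs: Markovian with no Markovian proper subgraph. -/
def SGSmin (I : IndepModel V) : Set (EdgeSet V) :=
  {G | G ∈ CMC I ∧ ∀ G' ⊆ G, G' ∈ CMC I → G' = G}

/-- Frugal DAGs: Markovian with minimal edge count. -/
def Fr (I : IndepModel V) : Set (EdgeSet V) :=
  {G | G ∈ CMC I ∧ ∀ G' ∈ CMC I, G.card ≤ G'.card}

/-- Uniquely frugal DAGs. -/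
def uFr (I : IndepModel V) : Set (EdgeSet V) :=
  {G | G ∈ Fr I ∧ ∀ G' ∈ Fr I, MEquiv G' G}

/-- P-minimal DAGs: Markovian `G` such that no Markovian `G'` has `I(G) ⊊ I(G')`. -/
def Pm (I : IndepModel V) : Set (EdgeSet V) :=
  {G | G ∈ CMC I ∧ ∀ G' ∈ CMC I, ISub G G' → ISub G' G}

/-- Uniquely P-minimal DAGs. -/
def uPm (I : IndepModel V) : Set (EdgeSet V) :=
  {G | G ∈ Pm I ∧ ∀ G' ∈ Pm I, MEquiv G' G}

/-- A list is a permutation of the vertices of `V`. -/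
def IsPermList (π : List V) : Prop := π.Nodup ∧ ∀ v : V, v ∈ π

/-- The set of vertices preceding `k` in the permutation `π`. -/
def pre (π : List V) (k : V) : Finset V := (π.takeWhile (fun x => x != k)).toFinset

/-- The DAG induced from a permutation `π` by the Raskutti–Uhler (RU) construction:
`j → k` is an edge iff `j` precedes `k` in `π` and `X_j` is dependent on `X_k`
given all other predecessors of `k`. -/
noncomputable def RUedges (I : IndepModel V) (π : List V) : EdgeSet V :=
  Finset.univ.filter
    (fun e => e.1 ∈ pre π e.2 ∧ ¬ I {e.1} {e.2} ((pre π e.2).erase e.1))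

/-- `j → k` is a covered edge of `E`. -/
def CoveredEdge (E : EdgeSet V) (j k : V) : Prop :=
  (j, k) ∈ E ∧ parents E j = (parents E k).erase j

/-- `j → k` is a singular edge of `E`: no directed path from `j` to `k` other than
the edge itself. -/
def SingularEdge (E : EdgeSet V) (j k : V) : Prop :=
  (j, k) ∈ E ∧
    ∀ i, Relation.TransGen (Adj E) j i → Relation.TransGen (Adj E) i k → i = j ∨ i = k

/-- `π` is a causal order of the graph `E`: every ancestor of a vertex precedes it. -/
def CausalOrder (E : EdgeSet V) (π : List V) : Prop :=
  IsPermList π ∧ ∀ a b, Relation.TransGen (Adj E) a b → π.idxOf a < π.idxOf b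

/-- Two permutations differ by one adjacent transposition. -/
def AdjTrans (π τ : List V) : Prop :=
  ∃ (δ₁ δ₂ : List V) (a b : V), π = δ₁ ++ a :: b :: δ₂ ∧ τ = δ₁ ++ b :: a :: δ₂

/-- The non-descendants of `j` in the graph `E`. -/
noncomputable def nonDesc (E : EdgeSet V) (j : V) : Finset V :=
  Finset.univ.filter (fun i => ¬ Relation.ReflTransGen (Adj E) j i)


section TuckAux

set_option linter.unusedSectionVars false

variable {I : IndepModel V}

lemma pre_append_not_mem (L₁ L₂ : List V) (v : V) (h : v ∉ L₁) :
    pre (L₁ ++ L₂) v = L₁.toFinset ∪ pre L₂ v := by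
  induction L₁ with
  | nil => simp [pre]
  | cons a t ih =>
    simp only [List.mem_cons, not_or] at h
    have hav : (a != v) = true := by simp [bne_iff_ne]; exact fun e => h.1 e.symm
    simp only [List.cons_append, pre, List.takeWhile_cons, hav, if_true,
      List.toFinset_cons]
    rw [show (List.takeWhile (fun x => x != v) (t ++ L₂)).toFinset = pre (t ++ L₂) v from rfl,
      ih h.2, Finset.insert_union]
    rfl

lemma pre_append_mem (L₁ L₂ L₂' : List V) (v : V) (h : v ∈ L₁) :
    pre (L₁ ++ L₂) v = pre (L₁ ++ L₂') v := by
  induction L₁ with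
  | nil => cases h
  | cons a t ih =>
    by_cases hav : a = v
    · simp [pre, List.takeWhile_cons, hav]
    · have hvt : v ∈ t := by
        rcases List.mem_cons.1 h with h' | h'
        · exact absurd h'.symm hav
        · exact h'
      have hb : (a != v) = true := by simp [bne_iff_ne]; exact hav
      simp only [List.cons_append, pre, List.takeWhile_cons, hb, if_true, List.toFinset_cons]
      rw [show (List.takeWhile (fun x => x != v) (t ++ L₂)).toFinset = pre (t ++ L₂) v from rfl,
        show (List.takeWhile (fun x => x != v) (t ++ L₂')).toFinset = pre (t ++ L₂') v from rfl,
        ih hvt]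

lemma pre_cons_self (L : List V) (v : V) : pre (v :: L) v = ∅ := by
  simp [pre, List.takeWhile_cons]

lemma pre_cons_ne (L : List V) (a v : V) (h : a ≠ v) :
    pre (a :: L) v = insert a (pre L v) := by
  have hb : (a != v) = true := by simp [bne_iff_ne]; exact h
  simp [pre, List.takeWhile_cons, hb]

/-- The key graphoid exchange: if `x ⫫ y | C ∪ {w}` then conditioning on `x`
doesn't change whether `w ⫫ y | C`. -/
lemma indep_exchange (hG : Graphoid I) (x y w : V) (C : Finset V)
    (hxy : I {x} {y} (C ∪ {w})) : I {w} {y} C ↔ I {w} {y} (C ∪ {x}) := by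
  have hyx : I {y} {x} (C ∪ {w}) := hG.symm _ _ _ hxy
  constructor
  · intro h
    have h1 : I {y} {w} C := hG.symm _ _ _ h
    have h2 : I {y} ({w} ∪ {x}) C := hG.contraction _ _ _ _ h1 hyx
    exact hG.symm _ _ _ (hG.weakUnion _ _ _ _ h2)
  · intro h
    have h1 : I {y} {w} (C ∪ {x}) := hG.symm _ _ _ h
    have h2 : I {y} ({w} ∪ {x}) C := hG.intersection _ _ _ _ h1 hyx
    exact hG.symm _ _ _ ((hG.decomposition _ _ _ _ h2).1)

set_option maxHeartbeats 2000000

lemma mem_RUedges (w v : V) (L : List V) :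
    ((w, v) ∈ RUedges I L) ↔ (w ∈ pre L v ∧ ¬ I {w} {v} ((pre L v).erase w)) := by
  simp [RUedges]

lemma RUedges_swap (hG : Graphoid I) (δa δb : List V) (x y : V)
    (hperm : IsPermList (δa ++ x :: y :: δb))
    (hne : (x, y) ∉ RUedges I (δa ++ x :: y :: δb)) :
    RUedges I (δa ++ y :: x :: δb) = RUedges I (δa ++ x :: y :: δb) := by
  have hnd := hperm.1
  rw [List.nodup_append] at hnd
  obtain ⟨hnda, hndr, hdisj⟩ := hnd
  rw [List.nodup_cons] at hndr
  obtain ⟨hxm, hndr2⟩ := hndr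
  rw [List.nodup_cons] at hndr2
  obtain ⟨hyb, hndb⟩ := hndr2
  have hxy : x ≠ y := fun e => hxm (by simp [e])
  have hxb : x ∉ δb := fun e => hxm (by simp [e])
  have hxa : x ∉ δa := fun e => hdisj x e x (by simp) rfl
  have hya : y ∉ δa := fun e => hdisj y e y (by simp) rfl
  set S := δa.toFinset with hS
  have hxS : x ∉ S := by simp [hS, hxa]
  have hyS : y ∉ S := by simp [hS, hya]
  have hpx1 : pre (δa ++ x :: y :: δb) x = S := by
    rw [pre_append_not_mem _ _ _ hxa, pre_cons_self]; simp [hS]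
  have hpy1 : pre (δa ++ x :: y :: δb) y = insert x S := by
    rw [pre_append_not_mem _ _ _ hya, pre_cons_ne _ _ _ hxy, pre_cons_self]
    ext z; simp [hS]
  have hpy2 : pre (δa ++ y :: x :: δb) y = S := by
    rw [pre_append_not_mem _ _ _ hya, pre_cons_self]; simp [hS]
  have hpx2 : pre (δa ++ y :: x :: δb) x = insert y S := by
    rw [pre_append_not_mem _ _ _ hxa, pre_cons_ne _ _ _ hxy.symm, pre_cons_self]
    ext z; simp [hS]
  rw [mem_RUedges, hpy1] at hne
  have hI : I {x} {y} S := by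
    by_contra hcon
    exact hne ⟨Finset.mem_insert_self _ _, by rwa [Finset.erase_insert hxS]⟩
  have hI' : I {y} {x} S := hG.symm _ _ _ hI
  ext ⟨w, v⟩
  rw [mem_RUedges, mem_RUedges]
  have hv := hperm.2 v
  rw [List.mem_append, List.mem_cons, List.mem_cons] at hv
  rcases hv with hva | hvx | hvy | hvb
  · rw [pre_append_mem _ _ _ _ hva]
  · -- v = x
    subst hvx
    rw [hpx1, hpx2]
    by_cases hwy : w = y
    · subst hwy
      constructor
      · rintro ⟨-, hnI⟩
        rw [Finset.erase_insert hyS] at hnI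
        exact absurd hI' hnI
      · rintro ⟨hw, -⟩
        exact absurd hw hyS
    · by_cases hwS : w ∈ S
      · have key := indep_exchange hG y v w (S.erase w)
          (by rw [show S.erase w ∪ {w} = insert w (S.erase w) from by ext z; simp, Finset.insert_erase hwS]; exact hI')
        have he : (insert y S).erase w = S.erase w ∪ {y} := by
          rw [Finset.erase_insert_of_ne (Ne.symm hwy)]; ext z; simp
        rw [he]
        simp only [Finset.mem_insert, hwS, or_true, true_and, hwS, true_and]
        rw [key]
      · have hw2 : w ∉ insert y S := by simp [hwy, hwS]
        simp [hwS, hw2]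
  · -- v = y
    subst hvy
    rw [hpy1, hpy2]
    by_cases hwx : w = x
    · subst hwx
      constructor
      · rintro ⟨hw, -⟩
        exact absurd hw hxS
      · rintro ⟨-, hnI⟩
        rw [Finset.erase_insert hxS] at hnI
        exact absurd hI hnI
    · by_cases hwS : w ∈ S
      · have key := indep_exchange hG x v w (S.erase w)
          (by rw [show S.erase w ∪ {w} = insert w (S.erase w) from by ext z; simp, Finset.insert_erase hwS]; exact hI)
        have he : (insert x S).erase w = S.erase w ∪ {x} := by
          rw [Finset.erase_insert_of_ne (Ne.symm hwx)]; ext z; simp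
        rw [he]
        simp only [hwS, true_and, Finset.mem_insert, or_true]
        rw [key]
      · have hw2 : w ∉ insert x S := by simp [hwx, hwS]
        simp [hwS, hw2]
  · -- v ∈ δb
    have hvnx : v ≠ x := fun e => hxb (e ▸ hvb)
    have hvny : v ≠ y := fun e => hyb (e ▸ hvb)
    have hvna : v ∉ δa := fun e => hdisj v e v (by simp [hvb]) rfl
    have e1 : δa ++ x :: y :: δb = (δa ++ [x, y]) ++ δb := by simp
    have e2 : δa ++ y :: x :: δb = (δa ++ [y, x]) ++ δb := by simp
    have hm1 : v ∉ δa ++ [y, x] := by simp [hvna, hvnx, hvny]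
    have hm2 : v ∉ δa ++ [x, y] := by simp [hvna, hvnx, hvny]
    rw [e1, e2, pre_append_not_mem (δa ++ [y, x]) δb v hm1,
      pre_append_not_mem (δa ++ [x, y]) δb v hm2]
    have : (δa ++ [y, x]).toFinset = (δa ++ [x, y]).toFinset := by
      ext z; simp; tauto
    rw [this]

/-- A DAG-preserving walk of adjacent transpositions (including endpoints). -/
def RUWalk (I : IndepModel V) (G : EdgeSet V) (σ τ : List V) : Prop :=
  ∃ (n : ℕ) (ws : ℕ → List V), ws 0 = σ ∧ ws n = τ ∧
    (∀ i < n, AdjTrans (ws i) (ws (i + 1))) ∧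
    (∀ i ≤ n, RUedges I (ws i) = G)

lemma RUWalk.refl {G : EdgeSet V} {σ : List V} (h : RUedges I σ = G) :
    RUWalk I G σ σ :=
  ⟨0, fun _ => σ, rfl, rfl, fun i hi => by omega, fun _ _ => h⟩

lemma RUWalk.out {G : EdgeSet V} {σ τ : List V} (h : RUWalk I G σ τ) :
    RUedges I τ = G := by
  obtain ⟨n, ws, h0, hn, -, hR⟩ := h
  rw [← hn]; exact hR n le_rfl

lemma AdjTrans.perm {σ τ : List V} (h : AdjTrans σ τ) : σ.Perm τ := by
  obtain ⟨a, b, x, y, h1, h2⟩ := h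
  subst h1; subst h2
  exact List.Perm.append_left a (List.Perm.swap y x b)

lemma RUWalk.perm {G : EdgeSet V} {σ τ : List V} (h : RUWalk I G σ τ) :
    σ.Perm τ := by
  obtain ⟨n, ws, h0, hn, hadj, -⟩ := h
  subst h0; subst hn
  have key : ∀ i ≤ n, (ws 0).Perm (ws i) := by
    intro i hi
    induction i with
    | zero => exact List.Perm.refl _
    | succ m ih =>
      exact (ih (by omega)).trans (AdjTrans.perm (hadj m (by omega)))
  exact key n le_rfl

lemma IsPermList.of_perm {σ τ : List V} (h : σ.Perm τ) (hp : IsPermList σ) :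
    IsPermList τ :=
  ⟨h.nodup_iff.1 hp.1, fun v => (h.mem_iff).1 (hp.2 v)⟩

lemma RUWalk.trans {G : EdgeSet V} {σ τ ρ : List V}
    (h1 : RUWalk I G σ τ) (h2 : RUWalk I G τ ρ) : RUWalk I G σ ρ := by
  obtain ⟨n1, w1, h10, h1n, h1a, h1R⟩ := h1
  obtain ⟨n2, w2, h20, h2n, h2a, h2R⟩ := h2
  refine ⟨n1 + n2, fun i => if i ≤ n1 then w1 i else w2 (i - n1), by simp [h10], ?_, ?_, ?_⟩
  · by_cases h : n2 = 0
    · subst h; simp [h1n, ← h2n, ← h20]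
    · have : ¬ (n1 + n2 ≤ n1) := by omega
      simp [this, h2n]
  · intro i hi
    by_cases hc1 : i + 1 ≤ n1
    · have : i ≤ n1 := by omega
      simp only [this, hc1, if_true]
      exact h1a i (by omega)
    · by_cases hc2 : i ≤ n1
      · have hieq : i = n1 := by omega
        subst hieq
        have : ¬ (i + 1 ≤ i) := by omega
        simp only [le_refl, if_true, this, if_false]
        have : w2 (i + 1 - i) = w2 1 := by norm_num
        rw [this, h1n, ← h20]
        exact h2a 0 (by omega)
      · simp only [hc2, if_false, hc1, if_false]
        have e1 : i + 1 - n1 = (i - n1) + 1 := by omega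
        rw [e1]
        exact h2a (i - n1) (by omega)
  · intro i hi
    by_cases hc : i ≤ n1
    · simp only [hc, if_true]; exact h1R i hc
    · simp only [hc, if_false]; exact h2R (i - n1) (by omega)

lemma RUWalk.single {G : EdgeSet V} (hG : Graphoid I) (δa δb : List V) (x y : V)
    (hperm : IsPermList (δa ++ x :: y :: δb))
    (hR : RUedges I (δa ++ x :: y :: δb) = G)
    (hne : (x, y) ∉ G) :
    RUWalk I G (δa ++ x :: y :: δb) (δa ++ y :: x :: δb) := by
  refine ⟨1, fun i => if i = 0 then δa ++ x :: y :: δb else δa ++ y :: x :: δb,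
    by simp, by simp, ?_, ?_⟩
  · intro i hi
    have : i = 0 := by omega
    subst this
    simp only [if_true]
    exact ⟨δa, δb, x, y, rfl, by simp⟩
  · intro i hi
    by_cases h : i = 0
    · simp [h, hR]
    · simp only [h, if_false]
      rw [RUedges_swap hG δa δb x y hperm (by rw [hR]; exact hne)]
      exact hR

lemma walk_moveLeft {G : EdgeSet V} (hG : Graphoid I) (d : V) :
    ∀ (M A rest : List V),
      (∀ m ∈ M, (m, d) ∉ G) →
      IsPermList (A ++ M ++ d :: rest) →
      RUedges I (A ++ M ++ d :: rest) = G →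
      RUWalk I G (A ++ M ++ d :: rest) (A ++ d :: (M ++ rest)) := by
  intro M
  induction M with
  | nil =>
    intro A rest _ _ hR
    simp only [List.nil_append, List.append_nil]
    exact RUWalk.refl (by simpa using hR)
  | cons m M' ih =>
    intro A rest hne hperm hR
    have e1 : A ++ (m :: M') ++ d :: rest = (A ++ [m]) ++ M' ++ d :: rest := by simp
    have w1 : RUWalk I G ((A ++ [m]) ++ M' ++ d :: rest) ((A ++ [m]) ++ d :: (M' ++ rest)) := by
      refine ih (A ++ [m]) rest (fun x hx => hne x (by simp [hx])) ?_ ?_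
      · rw [← e1]; exact hperm
      · rw [← e1]; exact hR
    have e2 : (A ++ [m]) ++ d :: (M' ++ rest) = A ++ m :: d :: (M' ++ rest) := by simp
    rw [e2] at w1
    have hperm2 : IsPermList (A ++ m :: d :: (M' ++ rest)) :=
      IsPermList.of_perm w1.perm (e1 ▸ hperm)
    have w2 : RUWalk I G (A ++ m :: d :: (M' ++ rest)) (A ++ d :: m :: (M' ++ rest)) := by
      refine RUWalk.single hG A (M' ++ rest) m d hperm2 ?_ (hne m (by simp))
      exact w1.out
    rw [e1, show A ++ d :: ((m :: M') ++ rest) = A ++ d :: m :: (M' ++ rest) from by simp]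
    exact w1.trans w2

lemma walk_sort {G : EdgeSet V} (hG : Graphoid I) (p : V → Bool) :
    ∀ (δ A M B : List V),
      (∀ g ∈ δ, p g = true → ∀ m ∈ M, (m, g) ∉ G) →
      (∀ g ∈ δ, p g = true → ∀ c ∈ δ, p c = false → (c, g) ∉ G) →
      IsPermList (A ++ M ++ δ ++ B) →
      RUedges I (A ++ M ++ δ ++ B) = G →
      RUWalk I G (A ++ M ++ δ ++ B)
        (A ++ δ.filter p ++ M ++ δ.filter (fun v => !(p v)) ++ B) := by
  intro δ
  induction δ with
  | nil =>
    intro A M B _ _ _ hR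
    simp only [List.filter_nil, List.nil_append, List.append_nil]
    exact RUWalk.refl (by simpa using hR)
  | cons d δ' ih =>
    intro A M B h1 h2 hperm hR
    by_cases hp : p d = true
    · -- move d left past M, then recurse with A ++ [d]
      have e1 : A ++ M ++ (d :: δ') ++ B = A ++ M ++ d :: (δ' ++ B) := by simp
      have w1 : RUWalk I G (A ++ M ++ d :: (δ' ++ B)) (A ++ d :: (M ++ (δ' ++ B))) := by
        refine walk_moveLeft hG d M A (δ' ++ B)
          (fun m hm => h1 d (by simp) hp m hm) (by rw [← e1]; exact hperm)
          (by rw [← e1]; exact hR)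
      have e2 : A ++ d :: (M ++ (δ' ++ B)) = (A ++ [d]) ++ M ++ δ' ++ B := by simp
      rw [e2] at w1
      have w2 : RUWalk I G ((A ++ [d]) ++ M ++ δ' ++ B)
          ((A ++ [d]) ++ δ'.filter p ++ M ++ δ'.filter (fun v => !(p v)) ++ B) := by
        refine ih (A ++ [d]) M B
          (fun g hg hpg m hm => h1 g (by simp [hg]) hpg m hm)
          (fun g hg hpg c hc hpc => h2 g (by simp [hg]) hpg c (by simp [hc]) hpc)
          (IsPermList.of_perm w1.perm (e1 ▸ hperm)) w1.out
      have e3 : (A ++ [d]) ++ δ'.filter p ++ M ++ δ'.filter (fun v => !(p v)) ++ B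
          = A ++ (d :: δ').filter p ++ M ++ (d :: δ').filter (fun v => !(p v)) ++ B := by
        simp [List.filter_cons, hp]
      rw [e1, ← e3]
      exact w1.trans w2
    · have hpf : p d = false := by simpa using hp
      have e1 : A ++ M ++ (d :: δ') ++ B = A ++ (M ++ [d]) ++ δ' ++ B := by simp
      have w2 : RUWalk I G (A ++ (M ++ [d]) ++ δ' ++ B)
          (A ++ δ'.filter p ++ (M ++ [d]) ++ δ'.filter (fun v => !(p v)) ++ B) := by
        refine ih A (M ++ [d]) B ?_
          (fun g hg hpg c hc hpc => h2 g (by simp [hg]) hpg c (by simp [hc]) hpc)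
          (by rw [← e1]; exact hperm) (by rw [← e1]; exact hR)
        intro g hg hpg m hm
        rcases List.mem_append.1 hm with hm | hm
        · exact h1 g (by simp [hg]) hpg m hm
        · have : m = d := by simpa using hm
          subst this
          exact h2 g (by simp [hg]) hpg m (by simp) hpf
      have e3 : A ++ δ'.filter p ++ (M ++ [d]) ++ δ'.filter (fun v => !(p v)) ++ B
          = A ++ (d :: δ').filter p ++ M ++ (d :: δ').filter (fun v => !(p v)) ++ B := by
        simp [List.filter_cons, hpf]
      rw [e1, ← e3]
      exact w2

end TuckAux

/-- if `j → k` is singular in `G_π`, there is a walk of adjacent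
transpositions from `π` to `τ = tuck(π, j, k)` that is DAG-preserving except at the
final permutation, whose DAG differs from `G_π`. -/
theorem singular_tuck_walk (I : IndepModel V) (hG : Graphoid I)
    (j k : V) (δ₁ δ₂ δ₃ γ γc : List V) (π τ : List V)
    (hπ : π = δ₁ ++ j :: (δ₂ ++ k :: δ₃))
    (hperm : IsPermList π)
    (hsing : SingularEdge (RUedges I π) j k)
    (hγ : γ = δ₂.filter (fun i => decide (Relation.TransGen (Adj (RUedges I π)) i k)))
    (hγc : γc = δ₂.filter (fun i => decide (¬ Relation.TransGen (Adj (RUedges I π)) i k)))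
    (hτ : τ = δ₁ ++ (γ ++ k :: j :: (γc ++ δ₃))) :
    ∃ (n : ℕ) (ws : ℕ → List V), 1 ≤ n ∧ ws 0 = π ∧ ws n = τ ∧
      (∀ i < n, AdjTrans (ws i) (ws (i + 1))) ∧
      (∀ i < n, RUedges I (ws i) = RUedges I π) ∧
      RUedges I τ ≠ RUedges I π := by
  classical
  obtain ⟨hjk, hsing2⟩ := hsing
  set G := RUedges I π with hGdef
  -- nodup facts
  have hnd : (δ₁ ++ j :: (δ₂ ++ k :: δ₃)).Nodup := hπ ▸ hperm.1
  rw [List.nodup_append, List.nodup_cons, List.nodup_append, List.nodup_cons] at hnd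
  obtain ⟨hnd1, ⟨hjm, hnd2, ⟨hkd3, hnd3⟩, hdisj2⟩, hdisj1⟩ := hnd
  have hjd2 : j ∉ δ₂ := fun h => hjm (by simp [h])
  have hjk' : j ≠ k := fun h => hjm (by simp [h])
  have hjd1 : j ∉ δ₁ := fun h => hdisj1 j h j (by simp) rfl
  have hkd2 : k ∉ δ₂ := fun h => hdisj2 k h k (by simp) rfl
  have hkd1 : k ∉ δ₁ := fun h => hdisj1 k h k (by simp [List.mem_append]) rfl
  set p : V → Bool := fun i => decide (Relation.TransGen (Adj G) i k) with hp
  have hγ' : γ = δ₂.filter p := hγ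
  have hγc' : γc = δ₂.filter (fun v => !(p v)) := by
    rw [hγc]
    exact List.filter_congr (fun x _ => by simp [hp])
  have e0 : δ₁ ++ [j] ++ δ₂ ++ (k :: δ₃) = π := by rw [hπ]; simp
  -- Step A: sort δ₂ around j
  have wA : RUWalk I G (δ₁ ++ [j] ++ δ₂ ++ (k :: δ₃))
      (δ₁ ++ δ₂.filter p ++ [j] ++ δ₂.filter (fun v => !(p v)) ++ (k :: δ₃)) := by
    refine walk_sort hG p δ₂ δ₁ [j] (k :: δ₃) ?_ ?_ (by rw [e0]; exact hperm) (by rw [e0])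
    · intro g hg hpg m hm hedge
      have hmj : m = j := by simpa using hm
      subst hmj
      have tjg : Relation.TransGen (Adj G) m g := Relation.TransGen.single hedge
      have tgk : Relation.TransGen (Adj G) g k := of_decide_eq_true hpg
      rcases hsing2 g tjg tgk with h | h
      · exact hjd2 (h ▸ hg)
      · exact hkd2 (h ▸ hg)
    · intro g hg hpg c hc hpc hedge
      have tgk : Relation.TransGen (Adj G) g k := of_decide_eq_true hpg
      have tck : Relation.TransGen (Adj G) c k := Relation.TransGen.head hedge tgk
      exact (of_decide_eq_false hpc) tck
  have eB : δ₁ ++ δ₂.filter p ++ [j] ++ δ₂.filter (fun v => !(p v)) ++ (k :: δ₃)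
      = (δ₁ ++ γ ++ [j]) ++ γc ++ k :: δ₃ := by rw [hγ', hγc']
  rw [eB] at wA
  -- Step B: move k left past γc
  have wB : RUWalk I G ((δ₁ ++ γ ++ [j]) ++ γc ++ k :: δ₃)
      ((δ₁ ++ γ ++ [j]) ++ k :: (γc ++ δ₃)) := by
    refine walk_moveLeft hG k γc (δ₁ ++ γ ++ [j]) δ₃ ?_
      (IsPermList.of_perm wA.perm (e0 ▸ hperm)) wA.out
    intro c hc hedge
    rw [hγc'] at hc
    have hcf : (!(p c)) = true := (List.mem_filter.1 hc).2
    rw [Bool.not_eq_true'] at hcf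
    exact (of_decide_eq_false hcf) (Relation.TransGen.single hedge)
  have w : RUWalk I G π ((δ₁ ++ γ ++ [j]) ++ k :: (γc ++ δ₃)) := by
    rw [← e0]
    exact wA.trans wB
  obtain ⟨n₀, ws₀, h0, hend, hadj, hR⟩ := w
  have hτ' : τ = (δ₁ ++ γ) ++ k :: j :: (γc ++ δ₃) := by rw [hτ]; simp
  have hσ : (δ₁ ++ γ ++ [j]) ++ k :: (γc ++ δ₃) = (δ₁ ++ γ) ++ j :: k :: (γc ++ δ₃) := by simp
  refine ⟨n₀ + 1, fun i => if i ≤ n₀ then ws₀ i else τ, by omega, by simp [h0], by simp, ?_, ?_, ?_⟩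
  · intro i hi
    by_cases hc : i + 1 ≤ n₀
    · have hc' : i ≤ n₀ := by omega
      simp only [hc, hc', if_true]
      exact hadj i (by omega)
    · have hie : i = n₀ := by omega
      subst hie
      simp only [le_refl, if_true, hc, if_false]
      rw [hend, hσ, hτ']
      exact ⟨δ₁ ++ γ, γc ++ δ₃, j, k, rfl, rfl⟩
  · intro i hi
    have : i ≤ n₀ := by omega
    simp only [this, if_true]
    exact hR i this
  · intro heq
    have hjkτ : (j, k) ∈ RUedges I τ := by rw [heq]; exact hjk
    rw [mem_RUedges] at hjkτ
    have hpre : pre τ k = (δ₁ ++ γ).toFinset := by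
      have hkm : k ∉ δ₁ ++ γ := by
        rw [List.mem_append]
        rintro (h | h)
        · exact hkd1 h
        · rw [hγ'] at h
          exact hkd2 (List.mem_of_mem_filter h)
      rw [hτ', pre_append_not_mem _ _ _ hkm, pre_cons_self]
      simp
    rw [hpre] at hjkτ
    have := hjkτ.1
    rw [List.mem_toFinset, List.mem_append] at this
    rcases this with h | h
    · exact hjd1 h
    · rw [hγ'] at h
      exact hjd2 (List.mem_of_mem_filter h)
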